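/- (Vanishing of velocity components on the symmetry axes.) Let ω : S² → ℝ be bounded measurable and odd-odd symmetric, and let u be its Biot–Savart velocity. Then: (i) for every θ ∈ (−π/2, π/2), at the point x = (cos θ, 0, sin θ) one has u(x)·e_φ(x) = 0; (ii) for every φ ∈ [−π,π), at the point x = (cos φ, sin φ, 0) one has u(x)·e_θ(x) = 0, i.e. the third component u₃(x) = 0. -/

import Mathlib

open MeasureTheory Real Filter Set
open scoped ENNReal NNReal

noncomputable section

abbrev E3 : Type := EuclideanSpace ℝ (Fin 3)

/-- The vector `(a, b, c)` in `ℝ³`. -/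
def vec3 (a b c : ℝ) : E3 := (WithLp.equiv 2 (Fin 3 → ℝ)).symm ![a, b, c]

/-- Euclidean dot product in `ℝ³`. -/
def dot3 (x y : E3) : ℝ := x 0 * y 0 + x 1 * y 1 + x 2 * y 2

/-- Cross product in `ℝ³`. -/
def cross3 (x y : E3) : E3 :=
  vec3 (x 1 * y 2 - x 2 * y 1) (x 2 * y 0 - x 0 * y 2) (x 0 * y 1 - x 1 * y 0)

/-- The unit sphere `S²` in `ℝ³`. -/
def S2 : Set E3 := Metric.sphere (0 : E3) 1

/-- The surface measure on `S²`: the 2-dimensional Hausdorff measure restricted to `S²`. -/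
def sigma2 : Measure E3 := (μH[2] : Measure E3).restrict S2

/-- Spherical coordinates. -/
def sc (φ θ : ℝ) : E3 := vec3 (cos θ * cos φ) (cos θ * sin φ) (sin θ)

/-- The Biot–Savart velocity of a vorticity `ω` on the sphere. -/
def biotSavart (ω : E3 → ℝ) (x : E3) : E3 :=
  (2 * Real.pi)⁻¹ • ∫ y, (‖x - y‖ ^ 2)⁻¹ • ω y • cross3 x y ∂sigma2

/-- The unit tangent vector `e_φ`. -/
def ephi (y : E3) : E3 := vec3 (-(y 1) / sqrt (1 - (y 2) ^ 2)) (y 0 / sqrt (1 - (y 2) ^ 2)) 0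

/-- The unit tangent vector `e_θ`. -/
def etheta (y : E3) : E3 :=
  vec3 (-(y 2) * y 0 / sqrt (1 - (y 2) ^ 2)) (-(y 2) * y 1 / sqrt (1 - (y 2) ^ 2))
    (sqrt (1 - (y 2) ^ 2))

/-- Reflection in the second coordinate: `ỹ`. -/
def flip2 (y : E3) : E3 := vec3 (y 0) (-(y 1)) (y 2)

/-- Reflection in the third coordinate: `ȳ`. -/
def flip3 (y : E3) : E3 := vec3 (y 0) (y 1) (-(y 2))

/-- `ω` is odd-odd symmetric on the sphere. -/
def OddOdd (ω : E3 → ℝ) : Prop := ∀ x ∈ S2, ω (flip2 x) = -ω x ∧ ω (flip3 x) = -ω x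

def x₀ : E3 := vec3 1 0 0

/-- The region `Q(k₁, k₂)` on the sphere. -/
def Qset (k₁ k₂ : ℝ) : Set E3 :=
  (fun p : ℝ × ℝ => sc p.1 p.2) '' (Ioo k₁ Real.pi ×ˢ Ioo k₂ (Real.pi / 2))

/-- The open quarter sphere. -/
def S2q : Set E3 := {y ∈ S2 | 0 < y 1 ∧ 0 < y 2}

/-- The (possibly infinite) Lipschitz constant of `f` on the set `s`. -/
def lipOn (f : ℝ × ℝ → ℝ) (s : Set (ℝ × ℝ)) : ℝ≥0∞ :=
  ⨆ p ∈ s, ⨆ q ∈ s, edist (f p) (f q) / edist p q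

@[simp] lemma vec3_app0 (a b c : ℝ) : vec3 a b c 0 = a := rfl
@[simp] lemma vec3_app1 (a b c : ℝ) : vec3 a b c 1 = b := rfl
@[simp] lemma vec3_app2 (a b c : ℝ) : vec3 a b c 2 = c := rfl

lemma E3_ext {x y : E3} (h0 : x 0 = y 0) (h1 : x 1 = y 1) (h2 : x 2 = y 2) : x = y := by
  ext i; fin_cases i <;> assumption

/-- `flip2` as a linear isometry equivalence. -/
def flip2L : E3 ≃ₗᵢ[ℝ] E3 :=
{ toFun := flip2
  invFun := flip2
  map_add' := by
    intro x y
    apply E3_ext <;> simp [flip2, PiLp.add_apply] <;> ring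
  map_smul' := by
    intro c x
    apply E3_ext <;> simp [flip2, PiLp.smul_apply, smul_eq_mul] <;> ring
  left_inv := by intro x; apply E3_ext <;> simp [flip2]
  right_inv := by intro x; apply E3_ext <;> simp [flip2]
  norm_map' := by
    intro x
    rw [EuclideanSpace.norm_eq, EuclideanSpace.norm_eq]
    simp [Fin.sum_univ_three, flip2] }

/-- `flip3` as a linear isometry equivalence. -/
def flip3L : E3 ≃ₗᵢ[ℝ] E3 :=
{ toFun := flip3
  invFun := flip3
  map_add' := by
    intro x y
    apply E3_ext <;> simp [flip3, PiLp.add_apply] <;> ring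
  map_smul' := by
    intro c x
    apply E3_ext <;> simp [flip3, PiLp.smul_apply, smul_eq_mul] <;> ring
  left_inv := by intro x; apply E3_ext <;> simp [flip3]
  right_inv := by intro x; apply E3_ext <;> simp [flip3]
  norm_map' := by
    intro x
    rw [EuclideanSpace.norm_eq, EuclideanSpace.norm_eq]
    simp [Fin.sum_univ_three, flip3] }

lemma S2_measurable : MeasurableSet S2 :=
  (Metric.isClosed_sphere).measurableSet

lemma measurePreserving_of_isometry (T : E3 ≃ₗᵢ[ℝ] E3) (hTS2 : ⇑T ⁻¹' S2 = S2) :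
    MeasurePreserving T sigma2 sigma2 := by
  constructor
  · exact T.toHomeomorph.measurable
  · show Measure.map (⇑T) ((μH[2] : Measure E3).restrict S2) = _
    have h1 : (μH[2] : Measure E3).restrict S2
        = (μH[2] : Measure E3).restrict (⇑T ⁻¹' S2) := by rw [hTS2]
    have hm : Measurable (⇑T) := T.toHomeomorph.measurable
    rw [h1, ← Measure.restrict_map hm S2_measurable]
    have h2 : Measure.map (⇑T) (μH[2] : Measure E3) = μH[2] :=
      T.toIsometryEquiv.map_hausdorffMeasure 2
    rw [h2]
    rfl

/-- Core symmetry lemma: a component of the Biot–Savart velocity killed by a symmetry vanishes. -/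
lemma biotSavart_component_zero (ω : E3 → ℝ) (T : E3 ≃ₗᵢ[ℝ] E3) (x : E3)
    (hTx : T x = x) (hω : ∀ y ∈ S2, ω (T y) = -ω y)
    (hTS2 : ⇑T ⁻¹' S2 = S2)
    (hcross : ∀ y, cross3 x (T y) = -(T (cross3 x y)))
    (i : Fin 3) (hi : ∀ v : E3, T v i = -(v i)) :
    biotSavart ω x i = 0 := by
  set F : E3 → E3 := fun y => (‖x - y‖ ^ 2)⁻¹ • ω y • cross3 x y with hF
  have hmp : MeasurePreserving T sigma2 sigma2 := measurePreserving_of_isometry T hTS2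
  have hemb : MeasurableEmbedding (⇑T) := T.toHomeomorph.measurableEmbedding
  have h1 : ∫ y, F y ∂sigma2 = ∫ y, F (T y) ∂sigma2 := (hmp.integral_comp hemb F).symm
  have h2 : ∀ᵐ y ∂sigma2, F (T y) = T (F y) := by
    have hmem : ∀ᵐ y ∂sigma2, y ∈ S2 := ae_restrict_mem S2_measurable
    filter_upwards [hmem] with y hy
    have hnorm : ‖x - T y‖ = ‖x - y‖ := by
      rw [show x - T y = T (x - y) by rw [map_sub, hTx], T.norm_map]
    simp only [hF, hnorm, hω y hy, hcross y, neg_smul_neg, _root_.map_smul]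
  have h3 : ∫ y, F (T y) ∂sigma2 = ∫ y, T (F y) ∂sigma2 := integral_congr_ae h2
  have h4 : ∫ y, T (F y) ∂sigma2 = T (∫ y, F y ∂sigma2) :=
    T.toLinearIsometry.integral_comp_comm F
  have h5 : (∫ y, F y ∂sigma2) i = -((∫ y, F y ∂sigma2) i) := by
    conv_lhs => rw [h1, h3, h4]
    exact hi _
  have h6 : (∫ y, F y ∂sigma2) i = 0 := by linarith
  show ((2 * Real.pi)⁻¹ • ∫ y, F y ∂sigma2) i = 0
  rw [PiLp.smul_apply, h6, smul_zero]

lemma flip2_preimage_S2 : flip2 ⁻¹' S2 = S2 := by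
  ext y
  simp only [S2, Set.mem_preimage, mem_sphere_iff_norm, sub_zero]
  rw [show flip2 y = flip2L y from rfl, flip2L.norm_map]

lemma flip3_preimage_S2 : flip3 ⁻¹' S2 = S2 := by
  ext y
  simp only [S2, Set.mem_preimage, mem_sphere_iff_norm, sub_zero]
  rw [show flip3 y = flip3L y from rfl, flip3L.norm_map]

theorem velocity_vanishes_on_axes (ω : E3 → ℝ) (M : ℝ) (hmeas : Measurable ω)
    (hbdd : ∀ y, |ω y| ≤ M) (hsym : OddOdd ω) :
    (∀ θ ∈ Ioo (-(Real.pi/2)) (Real.pi/2),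
      dot3 (biotSavart ω (vec3 (cos θ) 0 (sin θ))) (ephi (vec3 (cos θ) 0 (sin θ))) = 0) ∧
    (∀ φ ∈ Ico (-Real.pi) Real.pi,
      dot3 (biotSavart ω (vec3 (cos φ) (sin φ) 0)) (etheta (vec3 (cos φ) (sin φ) 0)) = 0 ∧
      biotSavart ω (vec3 (cos φ) (sin φ) 0) 2 = 0) := by
  constructor
  · intro θ _
    set x : E3 := vec3 (cos θ) 0 (sin θ) with hx
    have hkey : biotSavart ω x 1 = 0 := by
      apply biotSavart_component_zero ω flip2L x
      · apply E3_ext <;> simp [flip2L, flip2, hx]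
      · exact fun y hy => (hsym y hy).1
      · exact flip2_preimage_S2
      · intro y
        apply E3_ext <;> simp [flip2L, flip2, cross3, hx, PiLp.neg_apply] <;> ring
      · intro v; simp [flip2L, flip2]
    simp [dot3, ephi, hx, (show biotSavart ω (vec3 (cos θ) 0 (sin θ)) 1 = 0 from hkey)]
  · intro φ _
    set x : E3 := vec3 (cos φ) (sin φ) 0 with hx
    have hkey : biotSavart ω x 2 = 0 := by
      apply biotSavart_component_zero ω flip3L x
      · apply E3_ext <;> simp [flip3L, flip3, hx]
      · exact fun y hy => (hsym y hy).2
      · exact flip3_preimage_S2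
      · intro y
        apply E3_ext <;> simp [flip3L, flip3, cross3, hx, PiLp.neg_apply] <;> ring
      · intro v; simp [flip3L, flip3]
    refine ⟨?_, hkey⟩
    simp [dot3, etheta, hx, (show biotSavart ω (vec3 (cos φ) (sin φ) 0) 2 = 0 from hkey)]
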